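/- Let n be an odd natural number with n ≥ 1 and let p₁ ≤ p₂ ≤ … ≤ pₙ and q₁ ≤ q₂ ≤ … ≤ qₙ be positive real numbers such that ∑_{j=1}^n p_j = ∑_{j=1}^n q_j and, for every k with 2 ≤ k ≤ n, ∑_{j=k}^n p_j ≤ ∑_{j=k}^n q_j. Then for every real x with 0 < x < 1, one has (∏_{j=1}^n p_j)·∏_{j=1}^n (x^{q_j} - 1) ≤ (∏_{j=1}^n q_j)·∏_{j=1}^n (x^{p_j} - 1). -/

import Mathlib

open Real Set

/-- Abel summation nonnegativity: if `C` is nondecreasing along `range n`, the total sum of `D`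
is zero and all tails of `D` are nonnegative, then `∑ C i * D i ≥ 0`. -/
private lemma abel_nonneg (n : ℕ) (C D : ℕ → ℝ)
    (hC : ∀ i, i + 1 < n → C i ≤ C (i + 1))
    (hsum : ∑ i ∈ Finset.range n, D i = 0)
    (htail : ∀ k, 1 ≤ k → k < n → 0 ≤ ∑ i ∈ Finset.Ico k n, D i) :
    0 ≤ ∑ i ∈ Finset.range n, C i * D i := by
  have habel := Finset.sum_range_by_parts C D n
  simp only [smul_eq_mul] at habel
  rw [habel, hsum, mul_zero, zero_sub, neg_nonneg]
  apply Finset.sum_nonpos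
  intro i hi
  rw [Finset.mem_range] at hi
  have h1 : 0 ≤ C (i + 1) - C i := sub_nonneg.2 (hC i (by omega))
  have h2 : ∑ j ∈ Finset.range (i + 1), D j ≤ 0 := by
    have hsplit := Finset.sum_range_add_sum_Ico D (show i + 1 ≤ n by omega)
    have := htail (i + 1) (by omega) (by omega)
    linarith
  exact mul_nonpos_of_nonneg_of_nonpos h1 h2

/-- Karamata-type inequality from a tangent-line bound and monotone derivative. -/
private lemma karamata_aux (n : ℕ) (P Q : ℕ → ℝ) (f g : ℝ → ℝ)
    (hP : Monotone P) (hPpos : ∀ i, 0 < P i) (hQpos : ∀ i, 0 < Q i)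
    (htan : ∀ s t : ℝ, 0 < s → 0 < t → f t + g t * (s - t) ≤ f s)
    (hg : MonotoneOn g (Set.Ioi 0))
    (hsum : ∑ i ∈ Finset.range n, P i = ∑ i ∈ Finset.range n, Q i)
    (htail : ∀ k, 1 ≤ k → k < n →
      ∑ i ∈ Finset.Ico k n, P i ≤ ∑ i ∈ Finset.Ico k n, Q i) :
    ∑ i ∈ Finset.range n, f (P i) ≤ ∑ i ∈ Finset.range n, f (Q i) := by
  have key : 0 ≤ ∑ i ∈ Finset.range n, g (P i) * (Q i - P i) := by
    apply abel_nonneg n (fun i => g (P i)) (fun i => Q i - P i)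
    · exact fun i _ => hg (hPpos i) (hPpos (i + 1)) (hP (Nat.le_succ i))
    · rw [Finset.sum_sub_distrib, hsum, sub_self]
    · intro k hk1 hkn
      rw [Finset.sum_sub_distrib, sub_nonneg]
      exact htail k hk1 hkn
  have step : ∑ i ∈ Finset.range n, f (P i)
      ≤ ∑ i ∈ Finset.range n, (f (Q i) - g (P i) * (Q i - P i)) := by
    apply Finset.sum_le_sum
    intro i _
    have := htan (Q i) (P i) (hQpos i) (hPpos i)
    linarith
  rw [Finset.sum_sub_distrib] at step
  linarith

theorem stmt_5 (n : ℕ) (hn : 1 ≤ n) (hodd : Odd n) (p q : Fin n → ℝ)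
    (hpmono : Monotone p) (hqmono : Monotone q)
    (hppos : ∀ j, 0 < p j) (hqpos : ∀ j, 0 < q j)
    (hsum : ∑ j, p j = ∑ j, q j)
    (htail : ∀ k : Fin n, 1 ≤ (k : ℕ) →
      ∑ j ∈ Finset.Ici k, p j ≤ ∑ j ∈ Finset.Ici k, q j)
    (x : ℝ) (hx0 : 0 < x) (hx1 : x < 1) :
    (∏ j, p j) * ∏ j, (x ^ q j - 1) ≤ (∏ j, q j) * ∏ j, (x ^ p j - 1) := by
  have hlogx : Real.log x < 0 := Real.log_neg hx0 hx1
  -- the convex function and its derivatives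
  set f : ℝ → ℝ := fun t => Real.log (1 - x ^ t) - Real.log t with hf
  set g : ℝ → ℝ := fun t => -Real.log x * (x ^ t / (1 - x ^ t)) - t⁻¹ with hg
  set g' : ℝ → ℝ := fun t => (t ^ 2)⁻¹ - Real.log x ^ 2 * x ^ t / (1 - x ^ t) ^ 2 with hg'
  have hE : ∀ t : ℝ, 0 < t → x ^ t < 1 := fun t ht => Real.rpow_lt_one hx0.le hx1 ht
  have hEpos : ∀ t : ℝ, 0 < x ^ t := fun t => Real.rpow_pos_of_pos hx0 t
  have hden : ∀ t : ℝ, 0 < t → 0 < 1 - x ^ t := fun t ht => by linarith [hE t ht]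
  have hderf : ∀ t : ℝ, 0 < t → HasDerivAt f (g t) t := by
    intro t ht
    have hne : (1 - x ^ t) ≠ 0 := (hden t ht).ne'
    have hE' : HasDerivAt (fun s : ℝ => x ^ s) (x ^ t * Real.log x) t :=
      (Real.hasStrictDerivAt_const_rpow hx0 t).hasDerivAt
    have h1E : HasDerivAt (fun s : ℝ => 1 - x ^ s) (-(x ^ t * Real.log x)) t := hE'.const_sub 1
    have hlog1 : HasDerivAt (fun s : ℝ => Real.log (1 - x ^ s))
        (-(x ^ t * Real.log x) / (1 - x ^ t)) t := h1E.log hne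
    have hlog2 : HasDerivAt Real.log t⁻¹ t := Real.hasDerivAt_log ht.ne'
    have := hlog1.sub hlog2
    convert this using 1
    all_goals first | rfl | (funext s; simp [hf, hg]) | (simp only [hg, hg']; ring)
  have hderg : ∀ t : ℝ, 0 < t → HasDerivAt g (g' t) t := by
    intro t ht
    have hne : (1 - x ^ t) ≠ 0 := (hden t ht).ne'
    have hE' : HasDerivAt (fun s : ℝ => x ^ s) (x ^ t * Real.log x) t :=
      (Real.hasStrictDerivAt_const_rpow hx0 t).hasDerivAt
    have h1E : HasDerivAt (fun s : ℝ => 1 - x ^ s) (-(x ^ t * Real.log x)) t := hE'.const_sub 1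
    have hdiv : HasDerivAt (fun s : ℝ => x ^ s / (1 - x ^ s))
        ((x ^ t * Real.log x * (1 - x ^ t) - x ^ t * -(x ^ t * Real.log x)) / (1 - x ^ t) ^ 2)
        t := hE'.div h1E hne
    have hinv : HasDerivAt (fun s : ℝ => s⁻¹) (-(t ^ 2)⁻¹) t := hasDerivAt_inv ht.ne'
    have hnum : x ^ t * Real.log x * (1 - x ^ t) - x ^ t * -(x ^ t * Real.log x)
        = x ^ t * Real.log x := by ring
    rw [hnum] at hdiv
    have := (hdiv.const_mul (-Real.log x)).sub hinv
    convert this using 1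
    all_goals first | rfl | (funext s; simp [hf, hg]) | (simp only [hg, hg']; ring)
  have hg'nonneg : ∀ t : ℝ, 0 < t → 0 ≤ g' t := by
    intro t ht
    have hdpos := hden t ht
    have hxt : x ^ t = Real.exp (Real.log x * t) := Real.rpow_def_of_pos hx0 t
    set u : ℝ := -(Real.log x * t) with hu
    have hupos : 0 < u := by
      have := mul_neg_of_neg_of_pos hlogx ht
      simp only [hu]; linarith
    have hxtu : x ^ t = Real.exp (-u) := by rw [hxt, hu, neg_neg]
    -- key inequality via sinh
    have hsinh : u / 2 ≤ Real.sinh (u / 2) := Real.self_le_sinh_iff.mpr (by linarith)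
    rw [Real.sinh_eq] at hsinh
    have hee : Real.exp (u / 2) * Real.exp (-(u / 2)) = 1 := by
      rw [← Real.exp_add]; simp
    have hee2 : Real.exp (-(u / 2)) * Real.exp (-(u / 2)) = Real.exp (-u) := by
      rw [← Real.exp_add]; ring_nf
    have hkey : u * Real.exp (-(u / 2)) ≤ 1 - Real.exp (-u) := by
      nlinarith [Real.exp_pos (-(u / 2))]
    have main : Real.log x ^ 2 * x ^ t * t ^ 2 ≤ (1 - x ^ t) ^ 2 := by
      have hu2 : Real.log x ^ 2 * t ^ 2 = u ^ 2 := by rw [hu]; ring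
      rw [hxtu]
      nlinarith [Real.exp_pos (-(u / 2)), Real.exp_pos (-u),
        mul_nonneg hupos.le (Real.exp_pos (-(u / 2))).le, hkey, hee2]
    have h2 : Real.log x ^ 2 * x ^ t / (1 - x ^ t) ^ 2 ≤ (t ^ 2)⁻¹ := by
      rw [div_le_iff₀ (by positivity), inv_mul_eq_div, le_div_iff₀ (by positivity)]
      linarith
    simp only [hg']
    linarith
  have hcont : ContinuousOn f (Set.Ioi (0 : ℝ)) :=
    fun t ht => ((hderf t ht).continuousAt).continuousWithinAt
  have hconv : ConvexOn ℝ (Set.Ioi (0 : ℝ)) f := by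
    apply convexOn_of_hasDerivWithinAt2_nonneg (convex_Ioi 0) hcont (f' := g) (f'' := g')
    · rw [interior_Ioi]; exact fun t ht => (hderf t ht).hasDerivWithinAt
    · rw [interior_Ioi]; exact fun t ht => (hderg t ht).hasDerivWithinAt
    · rw [interior_Ioi]; exact fun t ht => hg'nonneg t ht
  -- tangent line inequality
  have htan : ∀ s t : ℝ, 0 < s → 0 < t → f t + g t * (s - t) ≤ f s := by
    intro s t hs ht
    rcases lt_trichotomy t s with h | h | h
    · have hle := hconv.le_slope_of_hasDerivAt ht hs h (hderf t ht)
      rw [slope_def_field] at hle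
      have := (le_div_iff₀ (by linarith : (0:ℝ) < s - t)).mp hle
      linarith
    · subst h; simp
    · have hle := hconv.slope_le_of_hasDerivAt hs ht h (hderf t ht)
      rw [slope_def_field] at hle
      have := (div_le_iff₀ (by linarith : (0:ℝ) < t - s)).mp hle
      nlinarith
  -- monotonicity of g
  have hgmono : MonotoneOn g (Set.Ioi (0 : ℝ)) := by
    intro a ha b hb hab
    rcases eq_or_lt_of_le hab with rfl | hab'
    · exact le_refl _
    · have h1 := hconv.le_slope_of_hasDerivAt ha hb hab' (hderf a ha)
      have h2 := hconv.slope_le_of_hasDerivAt ha hb hab' (hderf b hb)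
      exact h1.trans h2
  -- transfer to ℕ-indexed sequences
  have hn1 : n - 1 < n := by omega
  set P : ℕ → ℝ := fun i => p ⟨min i (n - 1), by omega⟩ with hP
  set Q : ℕ → ℝ := fun i => q ⟨min i (n - 1), by omega⟩ with hQ
  have hPj : ∀ j : Fin n, P (j : ℕ) = p j := by
    intro j
    simp only [hP]
    congr 1
    have hj := j.isLt
    exact Fin.ext (by show min (j : ℕ) (n - 1) = (j : ℕ); omega)
  have hQj : ∀ j : Fin n, Q (j : ℕ) = q j := by
    intro j
    simp only [hQ]
    congr 1
    have hj := j.isLt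
    exact Fin.ext (by show min (j : ℕ) (n - 1) = (j : ℕ); omega)
  have hPmono : Monotone P := by
    intro i j hij
    exact hpmono (show (⟨min i (n-1), _⟩ : Fin n) ≤ ⟨min j (n-1), _⟩ by
      simp [Fin.le_def]; omega)
  have hPpos : ∀ i, 0 < P i := fun i => hppos _
  have hQpos : ∀ i, 0 < Q i := fun i => hqpos _
  -- sum conversions
  have hsum_p : ∀ (F : ℝ → ℝ), ∑ j : Fin n, F (p j) = ∑ i ∈ Finset.range n, F (P i) := by
    intro F
    rw [← Fin.sum_univ_eq_sum_range (fun i => F (P i)) n]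
    exact Finset.sum_congr rfl fun j _ => by rw [hPj j]
  have hsum_q : ∀ (F : ℝ → ℝ), ∑ j : Fin n, F (q j) = ∑ i ∈ Finset.range n, F (Q i) := by
    intro F
    rw [← Fin.sum_univ_eq_sum_range (fun i => F (Q i)) n]
    exact Finset.sum_congr rfl fun j _ => by rw [hQj j]
  -- tail conversion
  have htail_conv : ∀ (r : Fin n → ℝ) (R : ℕ → ℝ), (∀ j : Fin n, R (j : ℕ) = r j) →
      ∀ (k : ℕ) (hk : k < n), ∑ j ∈ Finset.Ici (⟨k, hk⟩ : Fin n), r j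
        = ∑ i ∈ Finset.Ico k n, R i := by
    intro r R hRr k hk
    have hIci : (Finset.Ici (⟨k, hk⟩ : Fin n)) =
        Finset.univ.filter (fun j : Fin n => k ≤ (j : ℕ)) := by
      ext j
      simp [Finset.mem_Ici, Fin.le_def]
    calc ∑ j ∈ Finset.Ici (⟨k, hk⟩ : Fin n), r j
        = ∑ j : Fin n, if k ≤ (j : ℕ) then R (j : ℕ) else 0 := by
          rw [hIci, Finset.sum_filter]
          exact Finset.sum_congr rfl fun j _ => by
            split_ifs with h
            · exact (hRr j).symm
            · rfl
      _ = ∑ i ∈ Finset.range n, (if k ≤ i then R i else 0) :=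
          Fin.sum_univ_eq_sum_range (fun i => if k ≤ i then R i else 0) n
      _ = ∑ i ∈ (Finset.range n).filter (fun i => k ≤ i), R i :=
          (Finset.sum_filter _ _).symm
      _ = ∑ i ∈ Finset.Ico k n, R i := by
          congr 1
          ext i
          simp only [Finset.mem_filter, Finset.mem_range, Finset.mem_Ico]
          omega
  have htailPQ : ∀ k, 1 ≤ k → k < n →
      ∑ i ∈ Finset.Ico k n, P i ≤ ∑ i ∈ Finset.Ico k n, Q i := by
    intro k hk1 hkn
    rw [← htail_conv p P hPj k hkn, ← htail_conv q Q hQj k hkn]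
    exact htail ⟨k, hkn⟩ hk1
  have hsumPQ : ∑ i ∈ Finset.range n, P i = ∑ i ∈ Finset.range n, Q i := by
    have h1 := hsum_p id
    have h2 := hsum_q id
    simp only [id_eq] at h1 h2
    rw [← h1, ← h2]; exact hsum
  -- Karamata
  have hkaramata : ∑ i ∈ Finset.range n, f (P i) ≤ ∑ i ∈ Finset.range n, f (Q i) :=
    karamata_aux n P Q f g hPmono hPpos hQpos htan hgmono hsumPQ htailPQ
  have hkar : ∑ j : Fin n, f (p j) ≤ ∑ j : Fin n, f (q j) := by
    rw [hsum_p f, hsum_q f]; exact hkaramata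
  -- positivity of products
  have hAp : 0 < ∏ j, p j := Finset.prod_pos fun j _ => hppos j
  have hAq : 0 < ∏ j, q j := Finset.prod_pos fun j _ => hqpos j
  have hBp : 0 < ∏ j, (1 - x ^ p j) := Finset.prod_pos fun j _ => hden _ (hppos j)
  have hBq : 0 < ∏ j, (1 - x ^ q j) := Finset.prod_pos fun j _ => hden _ (hqpos j)
  -- log form
  have hlogform : ∀ (r : Fin n → ℝ), (∀ j, 0 < r j) →
      ∑ j : Fin n, f (r j) = Real.log (∏ j, (1 - x ^ r j)) - Real.log (∏ j, r j) := by
    intro r hr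
    rw [Real.log_prod (fun j _ => (hden _ (hr j)).ne'),
      Real.log_prod (fun j _ => (hr j).ne'), ← Finset.sum_sub_distrib]
  have hmainlog : Real.log ((∏ j, q j) * ∏ j, (1 - x ^ p j))
      ≤ Real.log ((∏ j, p j) * ∏ j, (1 - x ^ q j)) := by
    rw [Real.log_mul hAq.ne' hBp.ne', Real.log_mul hAp.ne' hBq.ne']
    have h1 := hlogform p hppos
    have h2 := hlogform q hqpos
    linarith [hkar, h1, h2]
  have hmain : (∏ j, q j) * ∏ j, (1 - x ^ p j) ≤ (∏ j, p j) * ∏ j, (1 - x ^ q j) :=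
    (Real.log_le_log_iff (by positivity) (by positivity)).mp hmainlog
  -- convert products of (x^t - 1)
  have hflip : ∀ (r : Fin n → ℝ), ∏ j, (x ^ r j - 1) = -∏ j, (1 - x ^ r j) := by
    intro r
    have : ∀ j : Fin n, x ^ r j - 1 = (-1) * (1 - x ^ r j) := fun j => by ring
    rw [Finset.prod_congr rfl (fun j _ => this j), Finset.prod_mul_distrib,
      Finset.prod_const, Finset.card_univ, Fintype.card_fin, hodd.neg_one_pow]
    ring
  rw [hflip p, hflip q]
  have h1 : (∏ j, p j) * -∏ j, (1 - x ^ q j) = -((∏ j, p j) * ∏ j, (1 - x ^ q j)) := by ring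
  have h2 : (∏ j, q j) * -∏ j, (1 - x ^ p j) = -((∏ j, q j) * ∏ j, (1 - x ^ p j)) := by ring
  rw [h1, h2, neg_le_neg_iff]
  exact hmain
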